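/- If a nondecreasing function a : ℝ≥0 → ℝ≥0 satisfies a(0)=0 and lim_{s→0+} a(s)=0, then the function ã defined by ã(s) = (1/s)∫_s^{2s} a(w) dw for s>0 and ã(0)=0 is continuous, nondecreasing, and satisfies a(s) ≤ ã(s) ≤ a(2s) for all s ≥ 0. -/

import Mathlib

open intervalIntegral MeasureTheory Set Filter

theorem stmt_0
    (a : ℝ → ℝ)
    (ha_nonneg : ∀ s, 0 ≤ s → 0 ≤ a s)
    (ha_mono : MonotoneOn a (Set.Ici 0))
    (ha_zero : a 0 = 0)
    (ha_lim : Filter.Tendsto a (nhdsWithin 0 (Set.Ioi 0)) (nhds 0))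
    (atil : ℝ → ℝ)
    (hatil : ∀ s, 0 < s → atil s = (1 / s) * ∫ w in s..(2 * s), a w)
    (hatil0 : atil 0 = 0) :
    ContinuousOn atil (Set.Ici 0) ∧ MonotoneOn atil (Set.Ici 0) ∧
      ∀ s, 0 ≤ s → a s ≤ atil s ∧ atil s ≤ a (2 * s) := by
  -- interval integrability on nonnegative intervals
  have hint : ∀ x y : ℝ, 0 ≤ x → 0 ≤ y → IntervalIntegrable a volume x y := by
    intro x y hx hy
    refine (ha_mono.mono ?_).intervalIntegrable
    intro z hz
    rcases Set.mem_uIcc.mp hz with h | h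
    · exact le_trans hx h.1
    · exact le_trans hy h.1
  -- pointwise bounds for s > 0
  have hbound : ∀ s : ℝ, 0 < s → a s ≤ atil s ∧ atil s ≤ a (2 * s) := by
    intro s hs
    have hs2 : s ≤ 2 * s := by linarith
    have hi : IntervalIntegrable a volume s (2 * s) := hint _ _ hs.le (by linarith)
    have h1 : s * a s ≤ ∫ w in s..(2 * s), a w := by
      have h := intervalIntegral.integral_mono_on hs2
        (intervalIntegrable_const (c := a s)) hi
        (fun x hx => ha_mono (show s ∈ Set.Ici (0:ℝ) from hs.le)
          (show x ∈ Set.Ici (0:ℝ) from le_trans hs.le hx.1) hx.1)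
      rw [intervalIntegral.integral_const, smul_eq_mul] at h
      have e : (2 * s - s) = s := by ring
      rw [e] at h
      exact h
    have h2 : (∫ w in s..(2 * s), a w) ≤ s * a (2 * s) := by
      have h := intervalIntegral.integral_mono_on hs2 hi
        (intervalIntegrable_const (c := a (2 * s)))
        (fun x hx => ha_mono (show x ∈ Set.Ici (0:ℝ) from le_trans hs.le hx.1)
          (show 2 * s ∈ Set.Ici (0:ℝ) by simp; linarith) hx.2)
      rw [intervalIntegral.integral_const, smul_eq_mul] at h
      have e : (2 * s - s) = s := by ring
      rw [e] at h
      exact h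
    rw [hatil s hs]
    constructor
    · rw [one_div, inv_mul_eq_div, le_div_iff₀ hs]
      linarith [h1]
    · rw [one_div, inv_mul_eq_div, div_le_iff₀ hs]
      linarith [h2]
  -- monotonicity
  have hmono : MonotoneOn atil (Set.Ici 0) := by
    intro x hx y hy hxy
    rcases eq_or_lt_of_le (show (0:ℝ) ≤ x from hx) with hx0 | hx0
    · rw [← hx0, hatil0]
      rcases eq_or_lt_of_le (le_trans hx0.le hxy) with hy0 | hy0
      · rw [← hy0, hatil0]
      · exact le_trans (ha_nonneg y hy0.le) (hbound y hy0).1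
    · -- 0 < x ≤ y; change of variables
      have hy0 : 0 < y := lt_of_lt_of_le hx0 hxy
      set c : ℝ := y / x with hc
      have hc1 : 1 ≤ c := (one_le_div hx0).mpr hxy
      have hc0 : c ≠ 0 := by positivity
      have hi' : IntervalIntegrable a volume y (2 * y) := hint _ _ hy0.le (by linarith)
      have hcomp : IntervalIntegrable (fun u => a (c * u)) volume x (2 * x) := by
        have := hi'.comp_mul_left (c := c)
        have e1 : y / c = x := by rw [hc]; field_simp
        have e2 : 2 * y / c = 2 * x := by rw [hc]; field_simp
        rwa [e1, e2] at this
      have hcv : (∫ u in x..(2 * x), a (c * u)) = c⁻¹ * ∫ w in y..(2 * y), a w := by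
        rw [intervalIntegral.integral_comp_mul_left a hc0]
        have e1 : c * x = y := by rw [hc]; field_simp
        have e2 : c * (2 * x) = 2 * y := by rw [hc]; field_simp
        rw [e1, e2]; simp
      have hle : (∫ u in x..(2 * x), a u) ≤ ∫ u in x..(2 * x), a (c * u) := by
        refine intervalIntegral.integral_mono_on (by linarith) (hint _ _ hx0.le (by linarith))
          hcomp ?_
        intro u hu
        have hu0 : 0 < u := lt_of_lt_of_le hx0 hu.1
        have h : u ≤ c * u := le_mul_of_one_le_left hu0.le hc1
        exact ha_mono (show u ∈ Set.Ici (0:ℝ) from hu0.le)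
          (show c * u ∈ Set.Ici (0:ℝ) from le_trans hu0.le h) h
      rw [hatil x hx0, hatil y hy0]
      calc (1 / x) * ∫ w in x..(2 * x), a w
          ≤ (1 / x) * ∫ u in x..(2 * x), a (c * u) := by
            apply mul_le_mul_of_nonneg_left hle (by positivity)
        _ = (1 / y) * ∫ w in y..(2 * y), a w := by
            rw [hcv, hc]; field_simp
  -- continuity
  have hcont : ContinuousOn atil (Set.Ici 0) := by
    intro s hs
    rcases eq_or_lt_of_le (show (0:ℝ) ≤ s from hs) with hs0 | hs0
    · -- continuity at 0 within Ici 0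
      subst hs0
      have hIoi : Filter.Tendsto atil (nhdsWithin 0 (Set.Ioi 0)) (nhds 0) := by
        have h2 : Filter.Tendsto (fun s : ℝ => 2 * s) (nhdsWithin 0 (Set.Ioi 0))
            (nhdsWithin 0 (Set.Ioi 0)) := by
          apply tendsto_nhdsWithin_of_tendsto_nhds_of_eventually_within
          · have : Filter.Tendsto (fun s : ℝ => 2 * s) (nhds 0) (nhds (2 * 0)) :=
              (continuous_const.mul continuous_id).tendsto 0
            simpa using this.mono_left nhdsWithin_le_nhds
          · filter_upwards [self_mem_nhdsWithin] with s hs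
            exact mul_pos two_pos (Set.mem_Ioi.mp hs)
        have hA : Filter.Tendsto (fun s => a (2 * s)) (nhdsWithin 0 (Set.Ioi 0)) (nhds 0) :=
          ha_lim.comp h2
        refine tendsto_of_tendsto_of_tendsto_of_le_of_le' tendsto_const_nhds hA ?_ ?_
        · filter_upwards [self_mem_nhdsWithin] with s hs
          exact le_trans (ha_nonneg s (le_of_lt hs)) (hbound s hs).1
        · filter_upwards [self_mem_nhdsWithin] with s hs
          exact (hbound s hs).2
      have : Filter.Tendsto atil (nhdsWithin 0 (Set.Ici 0)) (nhds 0) := by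
        rw [show (Set.Ici (0:ℝ)) = insert 0 (Set.Ioi 0) by
          rw [Set.Ioi_insert], nhdsWithin_insert, Filter.tendsto_sup]
        refine ⟨?_, hIoi⟩
        simpa [hatil0] using (tendsto_pure_nhds atil 0)
      rw [ContinuousWithinAt, hatil0]
      exact this
    · -- continuity at s > 0
      have hb : (0:ℝ) < s / 2 := by linarith
      set F : ℝ → ℝ := fun x => ∫ t in (s/2)..x, a t with hF
      have hFc : ContinuousOn F (Set.uIcc (s/2) (4 * s)) :=
        continuousOn_primitive_interval' (hint _ _ hb.le (by linarith)) Set.left_mem_uIcc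
      have huIcc : Set.uIcc (s/2) (4 * s) = Set.Icc (s/2) (4 * s) :=
        Set.uIcc_of_le (by linarith)
      have hmem : ∀ z : ℝ, s/2 < z → z < 4 * s → Set.uIcc (s/2) (4*s) ∈ nhds z := by
        intro z h1 h2
        rw [huIcc]
        exact Icc_mem_nhds h1 h2
      have hFs : ContinuousAt F s := hFc.continuousAt (hmem s (by linarith) (by linarith))
      have hF2s : ContinuousAt (fun x : ℝ => F (2 * x)) s := by
        have : ContinuousAt F (2 * s) := hFc.continuousAt (hmem (2*s) (by linarith) (by linarith))
        exact this.comp ((continuous_const.mul continuous_id).continuousAt)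
      have hca : ContinuousAt (fun x : ℝ => (1 / x) * (F (2 * x) - F x)) s := by
        have h1 : ContinuousAt (fun x : ℝ => 1 / x) s :=
          ContinuousAt.div continuousAt_const continuousAt_id (ne_of_gt hs0)
        exact h1.mul (hF2s.sub hFs)
      have heq : atil =ᶠ[nhds s] fun x => (1 / x) * (F (2 * x) - F x) := by
        have hIoo : Set.Ioo (s/2) (2*s) ∈ nhds s := Ioo_mem_nhds (by linarith) (by linarith)
        filter_upwards [hIoo] with x hx
        have hx0 : 0 < x := lt_trans hb hx.1
        rw [hatil x hx0, hF]
        congr 1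
        rw [intervalIntegral.integral_interval_sub_left (hint _ _ hb.le (by linarith))
          (hint _ _ hb.le hx0.le)]
      exact ((hca.congr heq.symm)).continuousWithinAt
  refine ⟨hcont, hmono, ?_⟩
  intro s hs
  rcases eq_or_lt_of_le hs with hs0 | hs0
  · rw [← hs0]
    simp [hatil0, ha_zero]
  · exact hbound s hs0
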